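/- arXiv:1702.00160 — 2 statements merged into one kernel-verified Lean document; each statement's English description precedes it below -/
import Mathlib

section
/- Let x be a Huffman sequence of length L with energy E > 2, and h ∈ ℂ^K with h_0 ≠ 0 ≠ h_{K-1}, with L = 2K + M for some M ≥ 0. Then the autocorrelation of y = x * h has the block form a_y = (-a_h, 0_M, E·a_h, 0_M, -a_h), i.e., the first 2K-1 entries of a_y equal -a_h, so the channel autocorrelation a_h is recovered exactly from a_y, and E = ‖(a_y entries L-1,...,L+2K-3)‖₂ / ‖(a_y entries 0,...,2K-2)‖₂. -/
open Complex Finset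

/-- Zero-padded extension of a finite vector to an ℕ-indexed sequence. -/
noncomputable def pad {L : ℕ} (x : Fin L → ℂ) : ℕ → ℂ :=
  fun n => if h : n < L then x ⟨n, h⟩ else 0

/-- Aperiodic (linear) convolution of ℕ-indexed sequences. -/
noncomputable def aconv (f g : ℕ → ℂ) : ℕ → ℂ :=
  fun k => ∑ l ∈ Finset.range (k + 1), f l * g (k - l)

/-- Conjugate time-reversal of a vector: (crev x) k = conj (x (L-1-k)). -/
noncomputable def crev {L : ℕ} (x : Fin L → ℂ) : Fin L → ℂ :=
  fun k => star (x k.rev)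

/-- Aperiodic autocorrelation a = x * conj(x⁻). -/
noncomputable def acorr {L : ℕ} (x : Fin L → ℂ) : ℕ → ℂ :=
  aconv (pad x) (pad (crev x))

/-! ### Auxiliary material -/

lemma pad_lt {A : ℕ} (f : Fin A → ℂ) {n : ℕ} (hn : n < A) : pad f n = f ⟨n, hn⟩ :=
  dif_pos hn

lemma pad_ge {A : ℕ} (f : Fin A → ℂ) {n : ℕ} (hn : A ≤ n) : pad f n = 0 :=
  dif_neg (by omega)

/-- The polynomial with coefficients given by a finite vector. -/
noncomputable def toPoly {A : ℕ} (f : Fin A → ℂ) : Polynomial ℂ :=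
  ∑ i : Fin A, Polynomial.monomial (i : ℕ) (f i)

lemma coeff_toPoly {A : ℕ} (f : Fin A → ℂ) (n : ℕ) : (toPoly f).coeff n = pad f n := by
  unfold toPoly
  rw [Polynomial.finset_sum_coeff]
  simp only [Polynomial.coeff_monomial]
  by_cases hn : n < A
  · rw [pad_lt f hn, Finset.sum_eq_single (⟨n, hn⟩ : Fin A)]
    · simp
    · intro b _ hb
      rw [if_neg]
      intro hbn
      exact hb (Fin.ext hbn)
    · simp
  · rw [pad_ge f (by omega)]
    apply Finset.sum_eq_zero
    intro i _
    rw [if_neg]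
    omega

lemma pad_eq_coeff {A : ℕ} (f : Fin A → ℂ) : pad f = fun m => (toPoly f).coeff m :=
  funext fun n => (coeff_toPoly f n).symm

lemma aconv_coeff (p q : Polynomial ℂ) (n : ℕ) :
    aconv (fun m => p.coeff m) (fun m => q.coeff m) n = (p * q).coeff n := by
  rw [Polynomial.coeff_mul, Finset.Nat.sum_antidiagonal_eq_sum_range_succ_mk]
  rfl

lemma aconv_pad {A B : ℕ} (f : Fin A → ℂ) (g : Fin B → ℂ) (n : ℕ) :
    aconv (pad f) (pad g) n = (toPoly f * toPoly g).coeff n := by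
  rw [pad_eq_coeff f, pad_eq_coeff g, aconv_coeff]

lemma acorr_eq {A : ℕ} (f : Fin A → ℂ) (n : ℕ) :
    acorr f n = (toPoly f * toPoly (crev f)).coeff n :=
  aconv_pad f (crev f) n

lemma natDegree_toPoly {A : ℕ} (f : Fin A → ℂ) (hA : 1 ≤ A)
    (hf : f ⟨A - 1, by omega⟩ ≠ 0) : (toPoly f).natDegree = A - 1 := by
  apply le_antisymm
  · rw [Polynomial.natDegree_le_iff_coeff_eq_zero]
    intro N hN
    rw [coeff_toPoly, pad_ge f (by omega)]
  · apply Polynomial.le_natDegree_of_ne_zero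
    rw [coeff_toPoly, pad_lt f (by omega)]
    exact hf

lemma toPoly_crev {A : ℕ} (f : Fin A → ℂ) (hA : 1 ≤ A)
    (hf : f ⟨A - 1, by omega⟩ ≠ 0) :
    toPoly (crev f) = ((toPoly f).map (starRingEnd ℂ)).reverse := by
  ext n
  rw [coeff_toPoly, Polynomial.coeff_reverse, Polynomial.natDegree_map,
    natDegree_toPoly f hA hf, Polynomial.coeff_map, coeff_toPoly]
  by_cases hn : n < A
  · rw [pad_lt _ hn, Polynomial.revAt_le (by omega), pad_lt f (by omega)]
    show star (f _) = star (f _)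
    congr 1
    apply congrArg
    apply Fin.ext
    rw [Fin.val_rev]
    simp only []
    omega
  · rw [pad_ge _ (by omega), Polynomial.revAt_eq_self_of_lt (by omega),
      pad_ge f (by omega), map_zero]

lemma acorr_zero {A : ℕ} (f : Fin A → ℂ) (hA : 1 ≤ A) :
    acorr f 0 = f ⟨0, by omega⟩ * star (f ⟨A - 1, by omega⟩) := by
  have hrev : (⟨0, by omega⟩ : Fin A).rev = ⟨A - 1, by omega⟩ := by
    apply Fin.ext
    rw [Fin.val_rev]
  unfold acorr aconv
  rw [Finset.sum_range_one, pad_lt f (by omega), pad_lt (crev f) (by omega)]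
  unfold crev
  rw [hrev]

lemma aconv_pad_zero {A B : ℕ} (f : Fin A → ℂ) (g : Fin B → ℂ) {n : ℕ}
    (hn : A + B - 1 ≤ n) (hA : 1 ≤ A) : aconv (pad f) (pad g) n = 0 := by
  apply Finset.sum_eq_zero
  intro l _
  by_cases hl : l < A
  · rw [pad_ge g (by omega), mul_zero]
  · rw [pad_ge f (by omega), zero_mul]

theorem stmt12 {L K M : ℕ} (hK : 1 ≤ K) (hLK : L = 2 * K + M)
    (E : ℝ) (hE : 2 < E) (x : Fin L → ℂ) (h : Fin K → ℂ)
    (hx : ∀ k : ℕ, acorr x k =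
      if k = 0 then -1 else if k = L - 1 then (E : ℂ) else if k = 2 * L - 2 then -1 else 0)
    (h0 : h ⟨0, by omega⟩ ≠ 0) (hKlast : h ⟨K - 1, by omega⟩ ≠ 0) :
    let ay : ℕ → ℂ :=
      acorr (fun j : Fin (L + K - 1) => aconv (pad x) (pad h) (j : ℕ))
    (∀ k : ℕ, ay k =
        (if k ≤ 2 * K - 2 then -(acorr h k) else 0) +
        (if L - 1 ≤ k ∧ k ≤ L + 2 * K - 3 then (E : ℂ) * acorr h (k - (L - 1)) else 0) +
        (if 2 * L - 2 ≤ k then -(acorr h (k - (2 * L - 2))) else 0)) ∧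
    (∀ k ≤ 2 * K - 2, acorr h k = -(ay k)) ∧
    E = Real.sqrt (∑ j ∈ Finset.range (2 * K - 1), ‖ay (L - 1 + j)‖ ^ 2) /
        Real.sqrt (∑ j ∈ Finset.range (2 * K - 1), ‖ay j‖ ^ 2) := by
  intro ay
  have hL2 : 2 ≤ L := by omega
  -- endpoints of x are nonzero
  have hacx0 := acorr_zero x (by omega)
  have hprod : x ⟨0, by omega⟩ * star (x ⟨L - 1, by omega⟩) = -1 := by
    rw [← hacx0, hx 0]; simp
  have hxlast : x ⟨L - 1, by omega⟩ ≠ 0 := by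
    intro hz
    rw [hz, star_zero, mul_zero] at hprod
    exact (by norm_num : (0 : ℂ) ≠ -1) hprod
  -- acorr h vanishes beyond 2K-2
  have hsupp : ∀ n : ℕ, 2 * K - 1 ≤ n → acorr h n = 0 := by
    intro n hn
    exact aconv_pad_zero h (crev h) (by omega) hK
  -- the polynomial of y is the product
  set y : Fin (L + K - 1) → ℂ := fun j => aconv (pad x) (pad h) (j : ℕ) with hydef
  have hy : toPoly y = toPoly x * toPoly h := by
    ext n
    rw [coeff_toPoly, ← aconv_pad]
    by_cases hn : n < L + K - 1
    · rw [pad_lt y hn]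
    · rw [pad_ge y (by omega), aconv_pad_zero x h (by omega) (by omega)]
  have hylast : y ⟨L + K - 2, by omega⟩ ≠ 0 := by
    show aconv (pad x) (pad h) (L + K - 2) ≠ 0
    rw [aconv_pad]
    have hdx := natDegree_toPoly x (by omega) hxlast
    have hdh := natDegree_toPoly h hK hKlast
    have hc := Polynomial.coeff_mul_degree_add_degree (toPoly x) (toPoly h)
    rw [hdx, hdh] at hc
    have he : L - 1 + (K - 1) = L + K - 2 := by omega
    rw [he] at hc
    rw [hc]
    unfold Polynomial.leadingCoeff
    rw [hdx, hdh, coeff_toPoly, coeff_toPoly, pad_lt x (by omega), pad_lt h (by omega)]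
    exact mul_ne_zero hxlast hKlast
  have hcy : toPoly (crev y) = toPoly (crev x) * toPoly (crev h) := by
    rw [toPoly_crev y (by omega) hylast, hy, Polynomial.map_mul,
      Polynomial.reverse_mul_of_domain, ← toPoly_crev x (by omega) hxlast,
      ← toPoly_crev h hK hKlast]
  -- key identity : ay = acorr x ⋆ acorr h
  have key : ∀ k : ℕ, ay k = aconv (acorr x) (acorr h) k := by
    intro k
    show acorr y k = _
    rw [acorr_eq, hy, hcy]
    have hr : toPoly x * toPoly h * (toPoly (crev x) * toPoly (crev h)) =
        (toPoly x * toPoly (crev x)) * (toPoly h * toPoly (crev h)) := by ring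
    rw [hr, Polynomial.coeff_mul, Finset.Nat.sum_antidiagonal_eq_sum_range_succ_mk]
    unfold aconv
    apply Finset.sum_congr rfl
    intro l _
    rw [acorr_eq, acorr_eq]
  -- the three-term formula
  have main : ∀ k : ℕ, ay k = -(acorr h k) +
      (if L - 1 ≤ k then (E : ℂ) * acorr h (k - (L - 1)) else 0) +
      (if 2 * L - 2 ≤ k then -(acorr h (k - (2 * L - 2))) else 0) := by
    intro k
    rw [key k]
    unfold aconv
    have hterm : ∀ l ∈ Finset.range (k + 1), acorr x l * acorr h (k - l) =
        (if l = 0 then -(acorr h (k - 0)) else 0) +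
        (if l = L - 1 then (E : ℂ) * acorr h (k - (L - 1)) else 0) +
        (if l = 2 * L - 2 then -(acorr h (k - (2 * L - 2))) else 0) := by
      intro l _
      rw [hx l]
      split_ifs <;> first | omega | (subst_vars; ring)
    rw [Finset.sum_congr rfl hterm]
    rw [Finset.sum_add_distrib, Finset.sum_add_distrib,
      Finset.sum_ite_eq' _ 0 (fun _ => -(acorr h (k - 0))),
      Finset.sum_ite_eq' _ (L - 1) (fun _ => (E : ℂ) * acorr h (k - (L - 1))),
      Finset.sum_ite_eq' _ (2 * L - 2) (fun _ => -(acorr h (k - (2 * L - 2))))]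
    simp only [Finset.mem_range, Nat.lt_succ_iff, Nat.sub_zero, Nat.zero_le, if_true]
  -- bullet 1
  have bullet1 : ∀ k : ℕ, ay k =
      (if k ≤ 2 * K - 2 then -(acorr h k) else 0) +
      (if L - 1 ≤ k ∧ k ≤ L + 2 * K - 3 then (E : ℂ) * acorr h (k - (L - 1)) else 0) +
      (if 2 * L - 2 ≤ k then -(acorr h (k - (2 * L - 2))) else 0) := by
    intro k
    rw [main k]
    congr 2
    · split_ifs with hk
      · rfl
      · rw [hsupp k (by omega), neg_zero]
    · split_ifs with h1 h2 h2
      · rfl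
      · rw [hsupp (k - (L - 1)) (by omega), mul_zero]
      · omega
      · rfl
  refine ⟨bullet1, ?_, ?_⟩
  -- bullet 2
  · intro k hk
    rw [main k, if_neg (by omega), if_neg (by omega), add_zero, add_zero, neg_neg]
  -- bullet 3
  · have hden : ∀ j ∈ Finset.range (2 * K - 1), ‖ay j‖ ^ 2 = ‖acorr h j‖ ^ 2 := by
      intro j hj
      rw [Finset.mem_range] at hj
      rw [main j, if_neg (by omega), if_neg (by omega), add_zero, add_zero, norm_neg]
    have hnum : ∀ j ∈ Finset.range (2 * K - 1),
        ‖ay (L - 1 + j)‖ ^ 2 = E ^ 2 * ‖acorr h j‖ ^ 2 := by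
      intro j hj
      rw [Finset.mem_range] at hj
      have hsub : L - 1 + j - (L - 1) = j := by omega
      rw [main (L - 1 + j), if_pos (by omega), if_neg (by omega), hsub,
        hsupp (L - 1 + j) (by omega), neg_zero, zero_add, add_zero, norm_mul,
        Complex.norm_real, Real.norm_eq_abs, abs_of_pos (by linarith), mul_pow]
    rw [Finset.sum_congr rfl hnum, Finset.sum_congr rfl hden, ← Finset.mul_sum]
    have hS : 0 < ∑ j ∈ Finset.range (2 * K - 1), ‖acorr h j‖ ^ 2 := by
      apply Finset.sum_pos' (fun i _ => sq_nonneg _)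
      refine ⟨0, Finset.mem_range.mpr (by omega), ?_⟩
      have hach0 := acorr_zero h hK
      have : acorr h 0 ≠ 0 := by
        rw [hach0]
        exact mul_ne_zero h0 (star_ne_zero.mpr hKlast)
      exact pow_pos (norm_pos_iff.mpr this) 2
    rw [Real.sqrt_mul (sq_nonneg E), Real.sqrt_sq (by linarith), mul_div_assoc,
      div_self (Real.sqrt_ne_zero'.mpr hS), mul_one]
end

section
/- Let x_1 ∈ ℂ^{L_1} and x_2 ∈ ℂ^{L_2} have nonzero first and last entries, and suppose their z-transforms X_1(z), X_2(z) have no common zeros (are co-prime). If y_1 ∈ ℂ^{L_1}, y_2 ∈ ℂ^{L_2} satisfy y_1 * conj(y_1^-) = x_1 * conj(x_1^-), y_2 * conj(y_2^-) = x_2 * conj(x_2^-), and y_1 * conj(y_2^-) = x_1 * conj(x_2^-), then there exists φ ∈ ℝ such that y_1 = e^{iφ} x_1 and y_2 = e^{iφ} x_2. -/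
open Complex Finset

open Polynomial

noncomputable def poly' {L : ℕ} (x : Fin L → ℂ) : ℂ[X] :=
  ∑ k : Fin L, C (x k) * X ^ (k : ℕ)

lemma coeff_poly' {L : ℕ} (x : Fin L → ℂ) (n : ℕ) : (poly' x).coeff n = pad x n := by
  simp only [poly', finset_sum_coeff, coeff_C_mul, coeff_X_pow, pad, mul_ite, mul_one, mul_zero]
  by_cases h : n < L
  · rw [Finset.sum_eq_single (⟨n, h⟩ : Fin L)]
    · simp [h]
    · intro b _ hb
      simp only [ite_eq_right_iff]
      intro hbn
      exact absurd (Fin.ext hbn.symm) hb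
    · simp
  · rw [dif_neg h, Finset.sum_eq_zero]
    intro b _
    rw [if_neg]
    omega

lemma aconv_eq {L M : ℕ} (a : Fin L → ℂ) (b : Fin M → ℂ) (k : ℕ) :
    aconv (pad a) (pad b) k = (poly' a * poly' b).coeff k := by
  rw [Polynomial.coeff_mul, Finset.Nat.sum_antidiagonal_eq_sum_range_succ_mk]
  simp [aconv, coeff_poly']

lemma natDegree_poly'_le {L : ℕ} (x : Fin L → ℂ) : (poly' x).natDegree ≤ L - 1 := by
  apply Polynomial.natDegree_le_iff_coeff_eq_zero.2
  intro n hn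
  rw [coeff_poly', pad, dif_neg]
  omega

lemma poly'_crev {L : ℕ} (hL : 1 ≤ L) (x : Fin L → ℂ) :
    poly' (crev x) = reflect (L - 1) ((poly' x).map (starRingEnd ℂ)) := by
  ext n
  rw [coeff_poly', coeff_reflect, Polynomial.coeff_map, coeff_poly']
  by_cases h : n < L
  · rw [revAt_le (by omega)]
    simp only [pad, dif_pos h, crev, dif_pos (show L - 1 - n < L by omega)]
    congr 2
    ext
    simp [Fin.rev]
    omega
  · rw [revAt_eq_self_of_lt (by omega)]
    simp [pad, dif_neg h]

lemma reflect_inj {N : ℕ} {p q : ℂ[X]} (h : reflect N p = reflect N q) : p = q := by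
  ext n
  have := congrArg (fun r => Polynomial.coeff r (revAt N n)) h
  simpa [coeff_reflect, revAt_invol] using this

lemma eval_poly' {L : ℕ} (x : Fin L → ℂ) (w : ℂ) :
    (poly' x).eval w = ∑ k : Fin L, x k * w ^ (k : ℕ) := by
  simp [poly', Polynomial.eval_finset_sum]

lemma pad_zero' {L : ℕ} (hL : 1 ≤ L) (x : Fin L → ℂ) : pad x 0 = x ⟨0, hL⟩ := dif_pos hL

lemma pad_crev_zero {L : ℕ} (hL : 1 ≤ L) (x : Fin L → ℂ) :
    pad (crev x) 0 = star (x ⟨L - 1, by omega⟩) := by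
  simp only [pad, crev, dif_pos (show 0 < L from hL)]
  congr 2

theorem stmt19 {L₁ L₂ : ℕ} (hL₁ : 1 ≤ L₁) (hL₂ : 1 ≤ L₂)
    (x₁ y₁ : Fin L₁ → ℂ) (x₂ y₂ : Fin L₂ → ℂ)
    (hx₁0 : x₁ ⟨0, by omega⟩ ≠ 0) (hx₁l : x₁ ⟨L₁ - 1, by omega⟩ ≠ 0)
    (hx₂0 : x₂ ⟨0, by omega⟩ ≠ 0) (hx₂l : x₂ ⟨L₂ - 1, by omega⟩ ≠ 0)
    (hcoprime : ¬∃ z : ℂ, z ≠ 0 ∧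
      (∑ k : Fin L₁, x₁ k * z ^ (-(k : ℤ))) = 0 ∧
      (∑ k : Fin L₂, x₂ k * z ^ (-(k : ℤ))) = 0)
    (ha₁ : ∀ k : ℕ, acorr y₁ k = acorr x₁ k)
    (ha₂ : ∀ k : ℕ, acorr y₂ k = acorr x₂ k)
    (hc : ∀ k : ℕ, aconv (pad y₁) (pad (crev y₂)) k = aconv (pad x₁) (pad (crev x₂)) k) :
    ∃ φ : ℝ, (∀ k, y₁ k = Complex.exp (Complex.I * φ) * x₁ k) ∧
             (∀ k, y₂ k = Complex.exp (Complex.I * φ) * x₂ k) := by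
  classical
  set A₁ := poly' x₁ with hA₁
  set A₂ := poly' x₂ with hA₂
  set B₁ := poly' y₁ with hB₁
  set B₂ := poly' y₂ with hB₂
  -- polynomial equalities
  have HP₁ : B₁ * poly' (crev y₁) = A₁ * poly' (crev x₁) := by
    ext n; have := ha₁ n; simpa [acorr, aconv_eq] using this
  have HP₂ : B₂ * poly' (crev y₂) = A₂ * poly' (crev x₂) := by
    ext n; have := ha₂ n; simpa [acorr, aconv_eq] using this
  have HPc : B₁ * poly' (crev y₂) = A₁ * poly' (crev x₂) := by
    ext n; have := hc n; simpa [aconv_eq] using this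
  -- nonvanishing facts
  have hA₁0 : A₁ ≠ 0 := by
    intro h
    apply hx₁0
    have h0 : pad x₁ 0 = 0 := by rw [← coeff_poly', ← hA₁, h, Polynomial.coeff_zero]
    rwa [pad_zero' hL₁] at h0
  have hA₂0 : A₂ ≠ 0 := by
    intro h
    apply hx₂0
    have h0 : pad x₂ 0 = 0 := by rw [← coeff_poly', ← hA₂, h, Polynomial.coeff_zero]
    rwa [pad_zero' hL₂] at h0
  have hRA₁0 : poly' (crev x₁) ≠ 0 := by
    intro h
    apply hx₁l
    have h0 : pad (crev x₁) 0 = 0 := by rw [← coeff_poly', h, Polynomial.coeff_zero]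
    rw [pad_crev_zero hL₁] at h0
    exact star_eq_zero.mp h0
  have hRA₂0 : poly' (crev x₂) ≠ 0 := by
    intro h
    apply hx₂l
    have h0 : pad (crev x₂) 0 = 0 := by rw [← coeff_poly', h, Polynomial.coeff_zero]
    rw [pad_crev_zero hL₂] at h0
    exact star_eq_zero.mp h0
  have hB₁0 : B₁ ≠ 0 := by
    intro h
    rw [h, zero_mul] at HP₁
    exact mul_ne_zero hA₁0 hRA₁0 HP₁.symm
  -- step: cancel B₁
  have step1 : poly' (crev y₂) * poly' (crev x₁) = poly' (crev x₂) * poly' (crev y₁) := by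
    apply mul_left_cancel₀ hB₁0
    calc B₁ * (poly' (crev y₂) * poly' (crev x₁))
        = (B₁ * poly' (crev y₂)) * poly' (crev x₁) := by ring
      _ = (A₁ * poly' (crev x₂)) * poly' (crev x₁) := by rw [HPc]
      _ = poly' (crev x₂) * (A₁ * poly' (crev x₁)) := by ring
      _ = poly' (crev x₂) * (B₁ * poly' (crev y₁)) := by rw [HP₁]
      _ = B₁ * (poly' (crev x₂) * poly' (crev y₁)) := by ring
  -- un-reflect
  have key : A₁ * B₂ = A₂ * B₁ := by
    have hmapinj : Function.Injective (Polynomial.map (starRingEnd ℂ)) :=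
      Polynomial.map_injective _ (RingHom.injective _)
    apply hmapinj
    apply reflect_inj (N := (L₂ - 1) + (L₁ - 1))
    have e1 : reflect ((L₂-1)+(L₁-1)) ((A₁ * B₂).map (starRingEnd ℂ))
        = poly' (crev y₂) * poly' (crev x₁) := by
      rw [Polynomial.map_mul, mul_comm ((A₁).map _),
        reflect_mul _ _ (Polynomial.natDegree_map_le.trans (natDegree_poly'_le y₂))
          (Polynomial.natDegree_map_le.trans (natDegree_poly'_le x₁)),
        poly'_crev hL₂, poly'_crev hL₁]
    have e2 : reflect ((L₂-1)+(L₁-1)) ((A₂ * B₁).map (starRingEnd ℂ))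
        = poly' (crev x₂) * poly' (crev y₁) := by
      rw [Polynomial.map_mul,
        reflect_mul _ _ (Polynomial.natDegree_map_le.trans (natDegree_poly'_le x₂))
          (Polynomial.natDegree_map_le.trans (natDegree_poly'_le y₁)),
        poly'_crev hL₂, poly'_crev hL₁]
    rw [e1, e2, step1]
  -- coprimality
  have hcop : IsCoprime A₁ A₂ := by
    rw [← EuclideanDomain.gcd_isUnit_iff]
    by_contra hu
    obtain ⟨w, hw⟩ := IsAlgClosed.exists_root (EuclideanDomain.gcd A₁ A₂)
      (fun h => hu (Polynomial.isUnit_iff_degree_eq_zero.mpr h))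
    have hw₁ : A₁.IsRoot w := hw.dvd (EuclideanDomain.gcd_dvd_left _ _)
    have hw₂ : A₂.IsRoot w := hw.dvd (EuclideanDomain.gcd_dvd_right _ _)
    have hw0 : w ≠ 0 := by
      intro h
      apply hx₁0
      have : A₁.coeff 0 = 0 := by
        rw [Polynomial.coeff_zero_eq_eval_zero]
        rw [h] at hw₁
        exact hw₁
      rw [hA₁, coeff_poly'] at this
      rwa [pad_zero' hL₁] at this
    apply hcoprime
    refine ⟨w⁻¹, inv_ne_zero hw0, ?_, ?_⟩
    · have := hw₁
      rw [Polynomial.IsRoot, hA₁, eval_poly'] at this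
      rw [← this]
      apply Finset.sum_congr rfl
      intro k _
      congr 1
      simp [zpow_neg, zpow_natCast, inv_pow, inv_inv]
    · have := hw₂
      rw [Polynomial.IsRoot, hA₂, eval_poly'] at this
      rw [← this]
      apply Finset.sum_congr rfl
      intro k _
      congr 1
      simp [zpow_neg, zpow_natCast, inv_pow, inv_inv]
  -- A₁ divides B₁
  have hdvd : A₁ ∣ B₁ := hcop.dvd_of_dvd_mul_left ⟨B₂, key.symm ▸ key ▸ key⟩
  obtain ⟨q, hq⟩ := hdvd
  have hq0 : q ≠ 0 := by
    intro h
    rw [h, mul_zero] at hq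
    exact hB₁0 hq
  have hdegA₁ : A₁.natDegree = L₁ - 1 := by
    apply le_antisymm (natDegree_poly'_le x₁)
    apply Polynomial.le_natDegree_of_ne_zero
    rw [coeff_poly']
    have : pad x₁ (L₁ - 1) = x₁ ⟨L₁ - 1, by omega⟩ := dif_pos (by omega)
    rw [this]
    exact hx₁l
  have hdegq : q.natDegree = 0 := by
    have h1 : B₁.natDegree = A₁.natDegree + q.natDegree :=
      hq ▸ Polynomial.natDegree_mul hA₁0 hq0
    have h2 : B₁.natDegree ≤ L₁ - 1 := natDegree_poly'_le y₁
    omega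
  obtain ⟨c, hc'⟩ := Polynomial.natDegree_eq_zero.mp hdegq
  have hB₁c : B₁ = A₁ * C c := by rw [hq, hc']
  have hc0 : c ≠ 0 := by
    intro h
    rw [h, map_zero] at hc'
    exact hq0 hc'.symm
  -- B₂ = A₂ * C c
  have hB₂c : B₂ = A₂ * C c := by
    apply mul_left_cancel₀ hA₁0
    rw [key, hB₁c]
    ring
  -- |c| = 1
  have hcrevy₁ : poly' (crev y₁) = C (starRingEnd ℂ c) * poly' (crev x₁) := by
    rw [poly'_crev hL₁, poly'_crev hL₁, ← hA₁, ← hB₁, hB₁c, Polynomial.map_mul,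
      Polynomial.map_C, mul_comm (Polynomial.map _ A₁), reflect_C_mul]
  have hcc : c * starRingEnd ℂ c = 1 := by
    have hM : A₁ * poly' (crev x₁) ≠ 0 := mul_ne_zero hA₁0 hRA₁0
    have hprod : (A₁ * C c) * (C (starRingEnd ℂ c) * poly' (crev x₁)) = A₁ * poly' (crev x₁) := by
      rw [← hB₁c, ← hcrevy₁]
      exact HP₁
    have h3 : (C (c * starRingEnd ℂ c) - 1) * (A₁ * poly' (crev x₁)) = 0 := by
      rw [map_mul]
      linear_combination hprod
    have h4 := (mul_eq_zero.mp h3).resolve_right hM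
    have h5 : C (c * starRingEnd ℂ c) = (1 : ℂ[X]) := by
      rwa [sub_eq_zero] at h4
    have := congrArg (fun p => Polynomial.coeff p 0) h5
    simpa using this
  have habs : ‖c‖ = 1 := by
    have : (Complex.normSq c : ℂ) = 1 := by rw [← Complex.mul_conj]; exact hcc
    have h2 : Complex.normSq c = 1 := by exact_mod_cast this
    rw [← Complex.sq_norm] at h2
    nlinarith [norm_nonneg c]
  refine ⟨c.arg, ?_, ?_⟩
  · intro k
    have hek : Complex.exp (Complex.I * c.arg) = c := by
      have h6 := Complex.norm_mul_exp_arg_mul_I c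
      rw [habs, Complex.ofReal_one, one_mul] at h6
      rw [mul_comm]
      exact h6
    rw [hek]
    have h1 : B₁.coeff k = (A₁ * C c).coeff k := by rw [hB₁c]
    rw [hB₁, coeff_poly', Polynomial.coeff_mul_C, hA₁, coeff_poly'] at h1
    have hpy : pad y₁ k = y₁ k := by simp [pad, k.isLt]
    have hpx : pad x₁ k = x₁ k := by simp [pad, k.isLt]
    rw [hpy, hpx] at h1
    rw [h1, mul_comm]
  · intro k
    have hek : Complex.exp (Complex.I * c.arg) = c := by
      have h6 := Complex.norm_mul_exp_arg_mul_I c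
      rw [habs, Complex.ofReal_one, one_mul] at h6
      rw [mul_comm]
      exact h6
    rw [hek]
    have h1 : B₂.coeff k = (A₂ * C c).coeff k := by rw [hB₂c]
    rw [hB₂, coeff_poly', Polynomial.coeff_mul_C, hA₂, coeff_poly'] at h1
    have hpy : pad y₂ k = y₂ k := by simp [pad, k.isLt]
    have hpx : pad x₂ k = x₂ k := by simp [pad, k.isLt]
    rw [hpy, hpx] at h1
    rw [h1, mul_comm]
end
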